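/- Let α, β ∈ ℤ^N be weakly decreasing integer vectors with β - α equal to a standard basis vector e_i (for some i, such that β is still weakly decreasing). Define d_γ = V(γ + ρ)/V(ρ) where V(x) = ∏_{1 ≤ i < j ≤ N} (x_i - x_j) and 2ρ = (N-1, N-3, …, -N+1). Then 1/N ≤ d_β/d_α ≤ N. -/
import Mathlib

private lemma tele_up (m : ℕ) :
    ∏ k ∈ Finset.range m, (((k : ℝ) + 2) / ((k : ℝ) + 1)) = (m : ℝ) + 1 := by
  induction m with
  | zero => simp
  | succ n ih =>
      rw [Finset.prod_range_succ, ih]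
      have h : ((n : ℝ) + 1) ≠ 0 := by positivity
      push_cast
      field_simp
      ring

private lemma tele_down (m : ℕ) :
    ∏ k ∈ Finset.range m, (((k : ℝ) + 1) / ((k : ℝ) + 2)) = 1 / ((m : ℝ) + 1) := by
  induction m with
  | zero => simp
  | succ n ih =>
      rw [Finset.prod_range_succ, ih]
      have h : ((n : ℝ) + 1) ≠ 0 := by positivity
      have h2 : ((n : ℝ) + 2) ≠ 0 := by positivity
      push_cast
      field_simp
      ring

theorem stmt_1 (N : ℕ) (hN : 1 ≤ N) (α β : Fin N → ℤ)
    (hα : ∀ i j : Fin N, i ≤ j → α j ≤ α i)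
    (hβ : ∀ i j : Fin N, i ≤ j → β j ≤ β i)
    (hdiff : ∃ i : Fin N, β = α + fun j => if j = i then 1 else 0) :
    let ρ : Fin N → ℝ := fun i => ((N : ℝ) - 1 - 2 * (i : ℕ)) / 2
    let V : (Fin N → ℝ) → ℝ := fun x =>
      ∏ p ∈ Finset.univ.filter (fun p : Fin N × Fin N => p.1 < p.2), (x p.1 - x p.2)
    let d : (Fin N → ℤ) → ℝ := fun γ => V (fun i => (γ i : ℝ) + ρ i) / V ρ
    1 / (N : ℝ) ≤ d β / d α ∧ d β / d α ≤ N := by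
  intro ρ V d
  obtain ⟨i, hβα⟩ := hdiff
  have hρdef : ∀ j : Fin N, ρ j = ((N : ℝ) - 1 - 2 * ((j : ℕ) : ℝ)) / 2 := fun _ => rfl
  have hVdef : ∀ x : Fin N → ℝ, V x =
      ∏ p ∈ Finset.univ.filter (fun p : Fin N × Fin N => p.1 < p.2), (x p.1 - x p.2) :=
    fun _ => rfl
  have hddef : ∀ γ : Fin N → ℤ, d γ = V (fun j => (γ j : ℝ) + ρ j) / V ρ := fun _ => rfl
  set X : Fin N → ℝ := fun j => (α j : ℝ) + ρ j with hXdef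
  set Y : Fin N → ℝ := fun j => (β j : ℝ) + ρ j with hYdef
  -- basic facts about β
  have hβi : β i = α i + 1 := by rw [hβα]; simp
  have hβne : ∀ j : Fin N, j ≠ i → β j = α j := by
    intro j hj; rw [hβα]; simp [hj]
  have hαlt : ∀ j : Fin N, j < i → α i + 1 ≤ α j := by
    intro j hj
    have h1 : β i ≤ β j := hβ j i hj.le
    rwa [hβi, hβne j (ne_of_lt hj)] at h1
  have hρsub : ∀ j k : Fin N, ρ j - ρ k = ((k : ℕ) : ℝ) - ((j : ℕ) : ℝ) := by
    intro j k; rw [hρdef, hρdef]; ring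
  -- gap estimates
  have hgap : ∀ (γ : Fin N → ℤ), (∀ a b : Fin N, a ≤ b → γ b ≤ γ a) →
      ∀ j k : Fin N, j < k → ((k : ℕ) : ℝ) - ((j : ℕ) : ℝ) ≤ ((γ j : ℝ) + ρ j) - ((γ k : ℝ) + ρ k) := by
    intro γ hγ j k hjk
    have h1 : (γ k : ℝ) ≤ (γ j : ℝ) := by exact_mod_cast hγ j k hjk.le
    have h2 := hρsub j k
    linarith
  have hXgap : ∀ j k : Fin N, j < k → ((k : ℕ) : ℝ) - ((j : ℕ) : ℝ) ≤ X j - X k :=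
    fun j k h => hgap α hα j k h
  have hYgap : ∀ j k : Fin N, j < k → ((k : ℕ) : ℝ) - ((j : ℕ) : ℝ) ≤ Y j - Y k :=
    fun j k h => hgap β hβ j k h
  have hXgapi : ∀ j : Fin N, j < i → ((i : ℕ) : ℝ) - ((j : ℕ) : ℝ) + 1 ≤ X j - X i := by
    intro j hj
    have h1 : ((α i : ℝ) + 1) ≤ (α j : ℝ) := by exact_mod_cast hαlt j hj
    have h2 := hρsub j i
    simp only [hXdef]
    linarith
  have hcast : ∀ j k : Fin N, j < k → ((j : ℕ) : ℝ) + 1 ≤ ((k : ℕ) : ℝ) := by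
    intro j k h
    have : (j : ℕ) + 1 ≤ (k : ℕ) := h
    exact_mod_cast this
  -- positivity of V
  have hVpos : ∀ Z : Fin N → ℝ, (∀ j k : Fin N, j < k → 0 < Z j - Z k) → 0 < V Z := by
    intro Z hZ
    rw [hVdef]
    apply Finset.prod_pos
    intro p hp
    rw [Finset.mem_filter] at hp
    exact hZ _ _ hp.2
  have hρpos : 0 < V ρ := by
    apply hVpos
    intro j k h
    rw [hρsub]
    have := hcast j k h
    linarith
  have hXpos : 0 < V X := by
    apply hVpos
    intro j k h
    have := hXgap j k h
    have := hcast j k h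
    linarith
  have hYpos : 0 < V Y := by
    apply hVpos
    intro j k h
    have := hYgap j k h
    have := hcast j k h
    linarith
  -- relation Y = X + e_i
  have hYi : Y i = X i + 1 := by
    simp only [hYdef, hXdef]
    rw [hβi]; push_cast; ring
  have hYne : ∀ j : Fin N, j ≠ i → Y j = X j := by
    intro j hj
    simp only [hYdef, hXdef]
    rw [hβne j hj]
  -- reduce to V Y / V X
  have hQ : d β / d α = V Y / V X := by
    rw [hddef, hddef, ← hXdef, ← hYdef]
    field_simp
  -- the ratio as a product over j ≠ i
  set g : Fin N → ℝ := fun j =>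
    if j < i then (Y j - Y i) / (X j - X i) else (Y i - Y j) / (X i - X j) with hgdef
  have hXne : ∀ j k : Fin N, j < k → X j - X k ≠ 0 := by
    intro j k h
    have h1 := hXgap j k h
    have h2 := hcast j k h
    intro hc
    linarith
  have hone : ∀ p : Fin N × Fin N, p ∈ Finset.univ.filter (fun p : Fin N × Fin N => p.1 < p.2) →
      (Y p.1 - Y p.2) / (X p.1 - X p.2) ≠ 1 → (p.1 = i ∨ p.2 = i) := by
    intro p hp hne
    rw [Finset.mem_filter] at hp
    by_contra hcon
    push_neg at hcon
    rw [hYne p.1 hcon.1, hYne p.2 hcon.2] at hne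
    exact hne (div_self (hXne p.1 p.2 hp.2))
  have hmain : V Y / V X = ∏ j ∈ Finset.univ.erase i, g j := by
    rw [hVdef, hVdef, ← Finset.prod_div_distrib]
    rw [← Finset.prod_filter_of_ne hone]
    apply Finset.prod_bij' (i := fun p _ => if p.1 = i then p.2 else p.1)
      (j := fun j _ => if j < i then (j, i) else (i, j))
    · -- membership forward: w p ∈ erase i
      intro p hp
      simp only [Finset.mem_filter, Finset.mem_univ, true_and] at hp
      obtain ⟨hlt, hor⟩ := hp
      simp only [Finset.mem_erase, Finset.mem_univ, and_true]
      rcases hor with h1 | h2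
      · rw [if_pos h1, ← h1]
        exact (ne_of_lt hlt).symm
      · have hne : p.1 ≠ i := by rw [← h2]; exact ne_of_lt hlt
        rw [if_neg hne]
        exact hne
    · -- membership backward: e j ∈ T
      intro j hj
      simp only [Finset.mem_erase, Finset.mem_univ, and_true] at hj
      simp only [Finset.mem_filter, Finset.mem_univ, true_and]
      by_cases hlt : j < i
      · rw [if_pos hlt]
        exact ⟨hlt, Or.inr rfl⟩
      · rw [if_neg hlt]
        exact ⟨lt_of_le_of_ne (not_lt.mp hlt) (Ne.symm hj), Or.inl rfl⟩
    · -- left inverse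
      intro p hp
      simp only [Finset.mem_filter, Finset.mem_univ, true_and] at hp
      obtain ⟨hlt, hor⟩ := hp
      rcases hor with h1 | h2
      · rw [if_pos h1]
        have : ¬ p.2 < i := by rw [← h1]; exact not_lt.mpr hlt.le
        rw [if_neg this, ← h1]
      · have hne : p.1 ≠ i := by rw [← h2]; exact ne_of_lt hlt
        rw [if_neg hne]
        have : p.1 < i := h2 ▸ hlt
        rw [if_pos this, ← h2]
    · -- right inverse
      intro j hj
      simp only [Finset.mem_erase, Finset.mem_univ, and_true] at hj
      by_cases hlt : j < i
      · rw [if_pos hlt]; simp [ne_of_lt hlt]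
      · rw [if_neg hlt]; simp [Ne.symm hj]
    · -- factor equality
      intro p hp
      simp only [Finset.mem_filter, Finset.mem_univ, true_and] at hp
      obtain ⟨hlt, hor⟩ := hp
      rcases hor with h1 | h2
      · rw [if_pos h1, hgdef]
        have : ¬ p.2 < i := by rw [← h1]; exact not_lt.mpr hlt.le
        simp only [if_neg this]
        rw [← h1]
      · have hne : p.1 ≠ i := by rw [← h2]; exact ne_of_lt hlt
        rw [if_neg hne, hgdef]
        have : p.1 < i := h2 ▸ hlt
        simp only [if_pos this]
        rw [← h2]
  -- elementwise bounds
  set l : Fin N → ℝ := fun j =>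
    if j < i then (((i : ℕ) : ℝ) - ((j : ℕ) : ℝ)) / (((i : ℕ) : ℝ) - ((j : ℕ) : ℝ) + 1)
    else 1 with hldef
  set h : Fin N → ℝ := fun j =>
    if j < i then 1
    else (((j : ℕ) : ℝ) - ((i : ℕ) : ℝ) + 1) / (((j : ℕ) : ℝ) - ((i : ℕ) : ℝ)) with hhdef
  have hbnds : ∀ j ∈ Finset.univ.erase i, 0 ≤ l j ∧ l j ≤ g j ∧ g j ≤ h j := by
    intro j hj
    simp only [Finset.mem_erase, Finset.mem_univ, and_true] at hj
    by_cases hlt : j < i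
    · have hc : ((j : ℕ) : ℝ) + 1 ≤ ((i : ℕ) : ℝ) := hcast j i hlt
      have ht : ((i : ℕ) : ℝ) - ((j : ℕ) : ℝ) + 1 ≤ X j - X i := hXgapi j hlt
      have hg : g j = (X j - X i - 1) / (X j - X i) := by
        rw [hgdef]
        simp only [if_pos hlt]
        rw [hYne j hj, hYi]
        ring_nf
      rw [hldef, hhdef, hg]
      simp only [if_pos hlt]
      refine ⟨?_, ?_, ?_⟩
      · apply div_nonneg <;> linarith
      · rw [div_le_div_iff₀ (by linarith) (by linarith)]
        nlinarith
      · rw [div_le_one (by linarith)]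
        linarith
    · have hilt : i < j := lt_of_le_of_ne (not_lt.mp hlt) (Ne.symm hj)
      have hc : ((i : ℕ) : ℝ) + 1 ≤ ((j : ℕ) : ℝ) := hcast i j hilt
      have ht : ((j : ℕ) : ℝ) - ((i : ℕ) : ℝ) ≤ X i - X j := hXgap i j hilt
      have hg : g j = (X i - X j + 1) / (X i - X j) := by
        rw [hgdef]
        simp only [if_neg hlt]
        rw [hYne j hj, hYi]
        ring_nf
      rw [hldef, hhdef, hg]
      simp only [if_neg hlt]
      refine ⟨zero_le_one, ?_, ?_⟩
      · rw [le_div_iff₀ (by linarith)]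
        linarith
      · rw [div_le_div_iff₀ (by linarith) (by linarith)]
        nlinarith
  -- split erase i
  have hsplit : Finset.univ.erase i = Finset.Iio i ∪ Finset.Ioi i := by
    ext j
    simp only [Finset.mem_erase, Finset.mem_univ, and_true, Finset.mem_union,
      Finset.mem_Iio, Finset.mem_Ioi]
    exact ne_iff_lt_or_gt
  have hdisj : Disjoint (Finset.Iio i) (Finset.Ioi i) := by
    rw [Finset.disjoint_left]
    intro j hj hj'
    simp only [Finset.mem_Iio] at hj
    simp only [Finset.mem_Ioi] at hj'
    exact absurd hj (not_lt.mpr hj'.le)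
  -- compute ∏ h
  have hHval : ∏ j ∈ Finset.univ.erase i, h j = (N : ℝ) - ((i : ℕ) : ℝ) := by
    rw [hsplit, Finset.prod_union hdisj]
    have h1 : ∏ j ∈ Finset.Iio i, h j = 1 := by
      apply Finset.prod_eq_one
      intro j hj
      simp only [Finset.mem_Iio] at hj
      rw [hhdef]
      simp only [if_pos hj]
    have h2 : ∏ j ∈ Finset.Ioi i, h j = (N : ℝ) - ((i : ℕ) : ℝ) := by
      have hiN : (i : ℕ) < N := i.isLt
      have e1 : ∏ j ∈ Finset.Ioi i, h j =
          ∏ k ∈ Finset.range (N - 1 - (i : ℕ)), (((k : ℝ) + 2) / ((k : ℝ) + 1)) := by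
        refine Finset.prod_bij' (fun j _ => (j : ℕ) - (i : ℕ) - 1)
          (fun k hk => (⟨(i : ℕ) + 1 + k, by
            simp only [Finset.mem_range] at hk; omega⟩ : Fin N)) ?_ ?_ ?_ ?_ ?_
        · intro j hj
          simp only [Finset.mem_Ioi, Fin.lt_def] at hj
          simp only [Finset.mem_range]
          have := j.isLt
          omega
        · intro k hk
          simp only [Finset.mem_range] at hk
          simp only [Finset.mem_Ioi, Fin.lt_def]
          omega
        · intro j hj
          simp only [Finset.mem_Ioi, Fin.lt_def] at hj
          apply Fin.ext
          simp only
          omega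
        · intro k hk
          simp only [Finset.mem_range] at hk
          simp only
          omega
        · intro j hj
          simp only [Finset.mem_Ioi, Fin.lt_def] at hj
          rw [hhdef]
          simp only [if_neg (by simp only [Fin.lt_def]; omega : ¬ j < i)]
          have hcc : (((j : ℕ) - (i : ℕ) - 1 : ℕ) : ℝ) = ((j : ℕ) : ℝ) - ((i : ℕ) : ℝ) - 1 := by
            have h3 : (j : ℕ) - (i : ℕ) - 1 = (j : ℕ) - ((i : ℕ) + 1) := by omega
            rw [h3, Nat.cast_sub (by omega)]
            push_cast
            ring
          rw [hcc]
          ring_nf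
      rw [e1, tele_up]
      have h4 : ((N - 1 - (i : ℕ) : ℕ) : ℝ) = (N : ℝ) - ((i : ℕ) : ℝ) - 1 := by
        have h5 : N - 1 - (i : ℕ) = N - ((i : ℕ) + 1) := by omega
        rw [h5, Nat.cast_sub (by omega)]
        push_cast
        ring
      rw [h4]
      ring
    rw [h1, h2, one_mul]
  -- compute ∏ l
  have hLval : ∏ j ∈ Finset.univ.erase i, l j = 1 / (((i : ℕ) : ℝ) + 1) := by
    rw [hsplit, Finset.prod_union hdisj]
    have h2 : ∏ j ∈ Finset.Ioi i, l j = 1 := by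
      apply Finset.prod_eq_one
      intro j hj
      simp only [Finset.mem_Ioi] at hj
      rw [hldef]
      simp only [if_neg (not_lt.mpr hj.le)]
    have h1 : ∏ j ∈ Finset.Iio i, l j = 1 / (((i : ℕ) : ℝ) + 1) := by
      have e1 : ∏ j ∈ Finset.Iio i, l j =
          ∏ k ∈ Finset.range (i : ℕ), (((k : ℝ) + 1) / ((k : ℝ) + 2)) := by
        refine Finset.prod_bij' (fun j _ => (i : ℕ) - 1 - (j : ℕ))
          (fun k hk => (⟨(i : ℕ) - 1 - k, by
            have := i.isLt; omega⟩ : Fin N)) ?_ ?_ ?_ ?_ ?_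
        · intro j hj
          simp only [Finset.mem_Iio, Fin.lt_def] at hj
          simp only [Finset.mem_range]
          omega
        · intro k hk
          simp only [Finset.mem_range] at hk
          simp only [Finset.mem_Iio, Fin.lt_def]
          omega
        · intro j hj
          simp only [Finset.mem_Iio, Fin.lt_def] at hj
          apply Fin.ext
          simp only
          omega
        · intro k hk
          simp only [Finset.mem_range] at hk
          simp only
          omega
        · intro j hj
          simp only [Finset.mem_Iio, Fin.lt_def] at hj
          rw [hldef]
          simp only [if_pos (by simp only [Fin.lt_def]; omega : j < i)]
          have hcc : (((i : ℕ) - 1 - (j : ℕ) : ℕ) : ℝ) = ((i : ℕ) : ℝ) - ((j : ℕ) : ℝ) - 1 := by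
            have h3 : (i : ℕ) - 1 - (j : ℕ) = (i : ℕ) - ((j : ℕ) + 1) := by omega
            rw [h3, Nat.cast_sub (by omega)]
            push_cast
            ring
          rw [hcc]
          ring_nf
      rw [e1, tele_down]
    rw [h1, h2, mul_one]
  -- assemble
  have hlg : ∏ j ∈ Finset.univ.erase i, l j ≤ ∏ j ∈ Finset.univ.erase i, g j :=
    Finset.prod_le_prod (fun j hj => (hbnds j hj).1) (fun j hj => (hbnds j hj).2.1)
  have hgh : ∏ j ∈ Finset.univ.erase i, g j ≤ ∏ j ∈ Finset.univ.erase i, h j := by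
    refine Finset.prod_le_prod (fun j hj => ?_) (fun j hj => (hbnds j hj).2.2)
    exact le_trans (hbnds j hj).1 (hbnds j hj).2.1
  have hiN : ((i : ℕ) : ℝ) + 1 ≤ (N : ℝ) := by
    have : (i : ℕ) + 1 ≤ N := i.isLt
    exact_mod_cast this
  have hNpos : (0 : ℝ) < N := by
    have : (0 : ℕ) < N := hN
    exact_mod_cast this
  constructor
  · rw [hQ, hmain]
    refine le_trans ?_ (hLval ▸ hlg)
    rw [div_le_div_iff₀ (by linarith) (by positivity)]
    have : (0 : ℝ) ≤ (i : ℕ) := Nat.cast_nonneg _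
    linarith
  · rw [hQ, hmain]
    refine le_trans (hHval ▸ hgh) ?_
    have : (0 : ℝ) ≤ (i : ℕ) := Nat.cast_nonneg _
    linarith
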